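/- Assume Δₖ ≠ 0 for k = 1,2,3,4. Then the sequence (Δ₀, Δ₁, Δ₂, Δ₃, Δ₄) has at most two sign changes, i.e. there are at most two indices k ∈ {0,1,2,3} with Δₖ · Δₖ₊₁ < 0. -/

import Mathlib

/-- The symmetrized tridiagonal matrix S with diagonal (α,γ,φ,κ) and
off-diagonal entries r₁ = √((1−α)β), r₂ = √((1−β−γ)δ), r₃ = √((1−δ−φ)(1−κ)). -/
noncomputable def Smat (α β γ δ φ κ : ℝ) : Matrix (Fin 4) (Fin 4) ℝ :=
  !![α, Real.sqrt ((1-α)*β), 0, 0;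
     Real.sqrt ((1-α)*β), γ, Real.sqrt ((1-β-γ)*δ), 0;
     0, Real.sqrt ((1-β-γ)*δ), φ, Real.sqrt ((1-δ-φ)*(1-κ));
     0, 0, Real.sqrt ((1-δ-φ)*(1-κ)), κ]

/-- Δₖ: the determinant of the leading k×k principal submatrix of a 4×4 matrix,
with Δ₀ = 1 (determinant of the empty matrix). -/
noncomputable def leadingMinor (M : Matrix (Fin 4) (Fin 4) ℝ) (k : ℕ) : ℝ :=
  if h : k ≤ 4 then (M.submatrix (Fin.castLE h) (Fin.castLE h)).det else 0

lemma leadingMinor_zero (M : Matrix (Fin 4) (Fin 4) ℝ) : leadingMinor M 0 = 1 := by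
  rw [leadingMinor, dif_pos (by norm_num : (0:ℕ) ≤ 4)]
  exact Matrix.det_fin_zero

lemma leadingMinor_one (α β γ δ φ κ : ℝ) :
    leadingMinor (Smat α β γ δ φ κ) 1 = α := by
  rw [leadingMinor, dif_pos (by norm_num : (1:ℕ) ≤ 4), Matrix.det_fin_one]
  rfl

lemma leadingMinor_rec (α β γ δ φ κ : ℝ) :
    leadingMinor (Smat α β γ δ φ κ) 4 =
      κ * leadingMinor (Smat α β γ δ φ κ) 3
        - (Real.sqrt ((1-δ-φ)*(1-κ)))^2 * leadingMinor (Smat α β γ δ φ κ) 2 := by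
  have h2 : (2:ℕ) ≤ 4 := by norm_num
  have h3 : (3:ℕ) ≤ 4 := by norm_num
  have h4 : (4:ℕ) ≤ 4 := by norm_num
  set s1 := Real.sqrt ((1-α)*β)
  set s2 := Real.sqrt ((1-β-γ)*δ)
  set s3 := Real.sqrt ((1-δ-φ)*(1-κ))
  have e2 : (Smat α β γ δ φ κ).submatrix (Fin.castLE h2) (Fin.castLE h2)
      = !![α, s1; s1, γ] := by ext i j; fin_cases i <;> fin_cases j <;> rfl
  have e3 : (Smat α β γ δ φ κ).submatrix (Fin.castLE h3) (Fin.castLE h3)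
      = !![α, s1, 0; s1, γ, s2; 0, s2, φ] := by
    ext i j; fin_cases i <;> fin_cases j <;> rfl
  have e4 : (Smat α β γ δ φ κ).submatrix (Fin.castLE h4) (Fin.castLE h4)
      = Smat α β γ δ φ κ := by ext i j; fin_cases i <;> fin_cases j <;> rfl
  rw [leadingMinor, leadingMinor, leadingMinor, dif_pos h2, dif_pos h3, dif_pos h4,
    e2, e3, e4]
  rw [show Smat α β γ δ φ κ = !![α,s1,0,0;s1,γ,s2,0;0,s2,φ,s3;0,0,s3,κ] from rfl]
  simp [Matrix.det_succ_row_zero, Fin.sum_univ_succ, Matrix.det_fin_three,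
    Matrix.det_fin_two, Fin.succAbove]
  ring

theorem stmt_7 (α β γ δ φ κ : ℝ)
    (hα : 0 ≤ α) (hα1 : α ≤ 1) (hβ : 0 ≤ β) (hβ1 : β ≤ 1)
    (hγ : 0 ≤ γ) (hγ1 : γ ≤ 1) (hδ : 0 ≤ δ) (hδ1 : δ ≤ 1)
    (hφ : 0 ≤ φ) (hφ1 : φ ≤ 1) (hκ : 0 ≤ κ) (hκ1 : κ ≤ 1)
    (hβγ : β + γ ≤ 1) (hδφ : δ + φ ≤ 1)
    (hΔ : ∀ k, 1 ≤ k → k ≤ 4 → leadingMinor (Smat α β γ δ φ κ) k ≠ 0) :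
    ((Finset.range 4).filter (fun k =>
        leadingMinor (Smat α β γ δ φ κ) k
          * leadingMinor (Smat α β γ δ φ κ) (k + 1) < 0)).card ≤ 2 := by
  set Δ : ℕ → ℝ := leadingMinor (Smat α β γ δ φ κ) with hΔdef
  set F := (Finset.range 4).filter (fun k => Δ k * Δ (k + 1) < 0) with hF
  have d1pos : 0 < Δ 1 := by
    have := hΔ 1 (by norm_num) (by norm_num)
    rw [hΔdef, leadingMinor_one] at *
    exact lt_of_le_of_ne hα (Ne.symm this)
  have h0 : 0 ∉ F := by
    simp only [hF, Finset.mem_filter, Finset.mem_range, not_and, not_lt]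
    intro _
    rw [hΔdef, leadingMinor_zero, one_mul, leadingMinor_one]
    exact hα
  have hnot : ¬ (1 ∈ F ∧ 2 ∈ F ∧ 3 ∈ F) := by
    rintro ⟨m1, m2, m3⟩
    simp only [hF, Finset.mem_filter, Finset.mem_range] at m1 m2 m3
    have p1 := m1.2
    have p2 := m2.2
    have p3 := m3.2
    have d2 : Δ 2 < 0 := by nlinarith
    have d3 : 0 < Δ 3 := by nlinarith
    have d4 : Δ 4 < 0 := by nlinarith
    have hrec := leadingMinor_rec α β γ δ φ κ
    rw [← hΔdef] at hrec
    nlinarith [sq_nonneg (Real.sqrt ((1-δ-φ)*(1-κ)))]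
  by_contra hc
  push_neg at hc
  have hsub : F ⊆ ({1, 2, 3} : Finset ℕ) := by
    intro k hk
    have hk4 : k ∈ Finset.range 4 := Finset.mem_of_mem_filter _ hk
    simp only [Finset.mem_range] at hk4
    have hk0 : k ≠ 0 := by rintro rfl; exact h0 hk
    interval_cases k <;> simp_all
  have hcard : ({1, 2, 3} : Finset ℕ).card ≤ F.card := by
    have : ({1, 2, 3} : Finset ℕ).card = 3 := rfl
    omega
  have := Finset.eq_of_subset_of_card_le hsub hcard
  apply hnot
  rw [this]
  refine ⟨by decide, by decide, by decide⟩
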